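/- Let Θ be a parameter space with δ-covering set {θ₁,…,θ_m} under TV distance on the induced distributions {P_θ}. Given i.i.d. X₁,…,Xₙ ∼ (1−ε)P_θ + εQ with θ ∈ Θ and arbitrary Q, define pairwise Scheffé tests ϕ_{jk} and the tournament winner θ̂ = θ_ĵ where ĵ minimizes ∑_{k≠j} ϕ_{jk}. If η > 8(ε+δ), then sup over θ∈Θ and Q of the probability that TV(P_{θ̂}, P_θ) > η + δ is at most 4·M(δ)²·exp(−(n/2)·(η/4 − 2(ε+δ))²), where M(δ) is the δ-covering number of Θ under TV. -/

import Mathlib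

open MeasureTheory

noncomputable def tvDist {Ω : Type*} [MeasurableSpace Ω] (P Q : Measure Ω) : ℝ :=
  ⨆ B : {B : Set Ω // MeasurableSet B}, |(P B.1).toReal - (Q B.1).toReal|

noncomputable def mix {Ω : Type*} [MeasurableSpace Ω] (ε : ℝ) (P Q : Measure Ω) : Measure Ω :=
  (ENNReal.ofReal (1 - ε)) • P + (ENNReal.ofReal ε) • Q

open Real ProbabilityTheory

namespace Stmt11Aux


lemma Dpos {p : ℝ} (hp0 : 0 ≤ p) (hp1 : p ≤ 1) (L : ℝ) : 0 < 1 - p + p * exp L := by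
  rcases eq_or_lt_of_le hp0 with h | h
  · simp [← h]
  · have := exp_pos L; nlinarith

/-- Hoeffding's lemma for Bernoulli(p). -/
lemma bern_mgf_le {p : ℝ} (hp0 : 0 ≤ p) (hp1 : p ≤ 1) (L : ℝ) :
    1 - p + p * exp L ≤ exp (L * p + L ^ 2 / 8) := by
  -- G L = L*p + L^2/8 - log D L, D L = 1 - p + p exp L
  set D : ℝ → ℝ := fun L => 1 - p + p * exp L with hD
  have hDpos : ∀ L, 0 < D L := Dpos hp0 hp1
  set G1 : ℝ → ℝ := fun L => p + L / 4 - p * exp L / D L with hG1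
  set G : ℝ → ℝ := fun L => L * p + L ^ 2 / 8 - log (D L) with hG
  have hDderiv : ∀ L, HasDerivAt D (p * exp L) L := by
    intro L
    exact ((hasDerivAt_exp L).const_mul p).const_add (1 - p)
  have hGderiv : ∀ L, HasDerivAt G (G1 L) L := by
    intro L
    have h1 : HasDerivAt (fun L => log (D L)) (p * exp L / D L) L :=
      (hDderiv L).log (hDpos L).ne'
    have h2 : HasDerivAt (fun L : ℝ => L * p + L ^ 2 / 8) (p + L / 4) L := by
      have := ((hasDerivAt_id L).mul_const p).add
        (((hasDerivAt_pow 2 L)).div_const 8)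
      exact this.congr_deriv (by ring)
    exact h2.sub h1
  have hG1deriv : ∀ L, HasDerivAt G1 (1 / 4 - p * exp L * (1 - p) / (D L) ^ 2) L := by
    intro L
    have hq : HasDerivAt (fun L => p * exp L / D L)
        ((p * exp L * D L - p * exp L * (p * exp L)) / (D L) ^ 2) L :=
      ((hasDerivAt_exp L).const_mul p).div (hDderiv L) (hDpos L).ne'
    have h2 : HasDerivAt (fun L : ℝ => p + L / 4) (1 / 4) L := by
      simpa using ((hasDerivAt_id L).div_const 4).const_add p
    have := h2.sub hq
    refine this.congr_deriv ?_
    have : p * exp L * D L - p * exp L * (p * exp L) = p * exp L * (1 - p) := by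
      simp only [hD]; ring
    rw [this]
  have hG1mono : Monotone G1 := by
    apply monotone_of_deriv_nonneg
    · exact fun L => (hG1deriv L).differentiableAt
    · intro L
      rw [(hG1deriv L).deriv]
      have hd := hDpos L
      have he := exp_pos L
      have key : p * exp L * (1 - p) ≤ (D L) ^ 2 / 4 := by
        have : (p * exp L - (1 - p)) ^ 2 ≥ 0 := sq_nonneg _
        have hDe : D L = 1 - p + p * exp L := rfl
        nlinarith
      have : p * exp L * (1 - p) / (D L) ^ 2 ≤ 1 / 4 := by
        rw [div_le_iff₀ (by positivity)]
        nlinarith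
      linarith
  have hG10 : G1 0 = 0 := by simp [hG1, hD]
  have hG0 : G 0 = 0 := by simp [hG, hD]
  have hGdiff : Differentiable ℝ G := fun x => (hGderiv x).differentiableAt
  have hGnonneg : ∀ L, 0 ≤ G L := by
    intro L
    rcases le_total 0 L with h | h
    · have hmono : MonotoneOn G (Set.Ici 0) := by
        apply monotoneOn_of_deriv_nonneg (convex_Ici 0) hGdiff.continuous.continuousOn
          (fun x _ => (hGderiv x).differentiableAt.differentiableWithinAt)
        intro x hx
        rw [(hGderiv x).deriv]
        have hx0 : (0:ℝ) ≤ x := le_of_lt (by simpa using hx)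
        have := hG1mono hx0
        rw [hG10] at this; exact this
      have := hmono (Set.self_mem_Ici) (Set.mem_Ici.mpr h) h
      rw [hG0] at this; exact this
    · have hanti : AntitoneOn G (Set.Iic 0) := by
        apply antitoneOn_of_deriv_nonpos (convex_Iic 0) hGdiff.continuous.continuousOn
          (fun x _ => (hGderiv x).differentiableAt.differentiableWithinAt)
        intro x hx
        rw [(hGderiv x).deriv]
        have hx0 : x ≤ (0:ℝ) := le_of_lt (by simpa using hx)
        have := hG1mono hx0
        rw [hG10] at this; exact this
      have := hanti (Set.mem_Iic.mpr h) (Set.self_mem_Iic) h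
      rw [hG0] at this; exact this
  have := hGnonneg L
  have hlog : log (D L) ≤ L * p + L ^ 2 / 8 := by
    simp only [hG] at this; linarith
  calc D L = exp (log (D L)) := (exp_log (hDpos L)).symm
  _ ≤ exp (L * p + L ^ 2 / 8) := exp_le_exp.mpr hlog



variable {Ω : Type*} [MeasurableSpace Ω] (P Q R : Measure Ω)

lemma toReal_le_one [IsProbabilityMeasure P] (s : Set Ω) : (P s).toReal ≤ 1 :=
  ENNReal.toReal_le_of_le_ofReal one_pos.le (by simpa using prob_le_one)

lemma tv_bdd [IsProbabilityMeasure P] [IsProbabilityMeasure Q] :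
    BddAbove (Set.range fun B : {B : Set Ω // MeasurableSet B} =>
      |(P B.1).toReal - (Q B.1).toReal|) := by
  refine ⟨1, ?_⟩
  rintro x ⟨B, rfl⟩
  rw [abs_sub_le_iff]
  constructor <;> nlinarith [toReal_le_one P B.1, toReal_le_one Q B.1,
    ENNReal.toReal_nonneg (a := P B.1), ENNReal.toReal_nonneg (a := Q B.1)]

lemma abs_le_tv [IsProbabilityMeasure P] [IsProbabilityMeasure Q] {B : Set Ω}
    (hB : MeasurableSet B) : |(P B).toReal - (Q B).toReal| ≤ tvDist P Q :=
  le_ciSup (tv_bdd P Q) ⟨B, hB⟩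

lemma tv_le [IsProbabilityMeasure P] [IsProbabilityMeasure Q] {c : ℝ}
    (h : ∀ B : Set Ω, MeasurableSet B → |(P B).toReal - (Q B).toReal| ≤ c) :
    tvDist P Q ≤ c :=
  ciSup_le fun B => h B.1 B.2

lemma tv_nonneg [IsProbabilityMeasure P] [IsProbabilityMeasure Q] : 0 ≤ tvDist P Q := by
  have := abs_le_tv P Q MeasurableSet.empty
  exact le_trans (abs_nonneg _) this

lemma tv_symm : tvDist P Q = tvDist Q P := by
  unfold tvDist
  congr 1; funext B; rw [abs_sub_comm]

lemma tv_triangle [IsProbabilityMeasure P] [IsProbabilityMeasure Q] [IsProbabilityMeasure R] :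
    tvDist P R ≤ tvDist P Q + tvDist Q R := by
  apply tv_le
  intro B hB
  calc |(P B).toReal - (R B).toReal|
      ≤ |(P B).toReal - (Q B).toReal| + |(Q B).toReal - (R B).toReal| := abs_sub_le _ _ _
    _ ≤ tvDist P Q + tvDist Q R := add_le_add (abs_le_tv P Q hB) (abs_le_tv Q R hB)

theorem mix_prob {ε : ℝ} (hε0 : 0 ≤ ε) (hε1 : ε ≤ 1)
    [IsProbabilityMeasure P] [IsProbabilityMeasure Q] :
    IsProbabilityMeasure (mix ε P Q) := by
  constructor
  unfold mix
  rw [Measure.add_apply, Measure.smul_apply, Measure.smul_apply, measure_univ, measure_univ,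
    smul_eq_mul, smul_eq_mul, mul_one, mul_one, ← ENNReal.ofReal_add (by linarith) hε0]
  norm_num

lemma mix_apply_toReal {ε : ℝ} (hε0 : 0 ≤ ε) (hε1 : ε ≤ 1)
    [IsFiniteMeasure P] [IsFiniteMeasure Q] (s : Set Ω) :
    ((mix ε P Q) s).toReal = (1 - ε) * (P s).toReal + ε * (Q s).toReal := by
  unfold mix
  rw [Measure.add_apply, Measure.smul_apply, Measure.smul_apply, smul_eq_mul, smul_eq_mul,
    ENNReal.toReal_add, ENNReal.toReal_mul, ENNReal.toReal_mul,
    ENNReal.toReal_ofReal (by linarith), ENNReal.toReal_ofReal hε0]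
  · exact ENNReal.mul_ne_top ENNReal.ofReal_ne_top (measure_ne_top _ _)
  · exact ENNReal.mul_ne_top ENNReal.ofReal_ne_top (measure_ne_top _ _)

lemma tv_mix_le {ε : ℝ} (hε0 : 0 ≤ ε) (hε1 : ε ≤ 1)
    [IsProbabilityMeasure P] [IsProbabilityMeasure Q] :
    tvDist (mix ε P Q) P ≤ ε := by
  haveI := mix_prob P Q hε0 hε1
  apply tv_le
  intro B hB
  rw [mix_apply_toReal P Q hε0 hε1]
  have h1 := toReal_le_one P B
  have h2 := toReal_le_one Q B
  have h3 : 0 ≤ (P B).toReal := ENNReal.toReal_nonneg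
  have h4 : 0 ≤ (Q B).toReal := ENNReal.toReal_nonneg
  rw [abs_le]
  constructor <;> nlinarith

/-- The Scheffé set realizes the TV distance. -/
lemma scheffe [IsProbabilityMeasure P] [IsProbabilityMeasure Q] :
    tvDist P Q = (P {x | Q.rnDeriv (P + Q) x < P.rnDeriv (P + Q) x}).toReal
      - (Q {x | Q.rnDeriv (P + Q) x < P.rnDeriv (P + Q) x}).toReal := by
  set ν : Measure Ω := P + Q with hν
  set f := P.rnDeriv ν with hf
  set g := Q.rnDeriv ν with hg
  set A : Set Ω := {x | g x < f x} with hA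
  have hAmeas : MeasurableSet A :=
    measurableSet_lt (Measure.measurable_rnDeriv _ _) (Measure.measurable_rnDeriv _ _)
  have hPν : P ≪ ν := Measure.absolutelyContinuous_of_le (Measure.le_add_right le_rfl)
  have hQν : Q ≪ ν := Measure.absolutelyContinuous_of_le (Measure.le_add_left le_rfl)
  have hPs : ∀ S : Set Ω, MeasurableSet S → P S = ∫⁻ x in S, f x ∂ν := by
    intro S hS; rw [hf, Measure.setLIntegral_rnDeriv hPν]
  have hQs : ∀ S : Set Ω, MeasurableSet S → Q S = ∫⁻ x in S, g x ∂ν := by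
    intro S hS; rw [hg, Measure.setLIntegral_rnDeriv hQν]
  -- inside A, Q ≤ P; outside A, P ≤ Q
  have hInA : ∀ S : Set Ω, MeasurableSet S → S ⊆ A → Q S ≤ P S := by
    intro S hS hSA
    rw [hPs S hS, hQs S hS]
    refine setLIntegral_mono (Measure.measurable_rnDeriv _ _) fun x hx => ?_
    exact le_of_lt (hSA hx)
  have hOutA : ∀ S : Set Ω, MeasurableSet S → S ⊆ Aᶜ → P S ≤ Q S := by
    intro S hS hSA
    rw [hPs S hS, hQs S hS]
    refine setLIntegral_mono (Measure.measurable_rnDeriv _ _) fun x hx => ?_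
    exact not_lt.mp (hSA hx)
  have key : ∀ B : Set Ω, MeasurableSet B →
      (P B).toReal - (Q B).toReal ≤ (P A).toReal - (Q A).toReal := by
    intro B hB
    have hEN : P B + Q A ≤ P A + Q B := by
      have h1 : P B = P (B ∩ A) + P (B \ A) := (measure_inter_add_diff B hAmeas).symm
      have h2 : Q B = Q (B ∩ A) + Q (B \ A) := (measure_inter_add_diff B hAmeas).symm
      have h3 : P A = P (A ∩ B) + P (A \ B) := (measure_inter_add_diff A hB).symm
      have h4 : Q A = Q (A ∩ B) + Q (A \ B) := (measure_inter_add_diff A hB).symm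
      have hBA : A ∩ B = B ∩ A := Set.inter_comm _ _
      have c1 : P (B \ A) ≤ Q (B \ A) :=
        hOutA _ (hB.diff hAmeas) (Set.diff_subset_iff.mpr (by simp [Set.union_comm]))
      have c2 : Q (A \ B) ≤ P (A \ B) :=
        hInA _ (hAmeas.diff hB) Set.diff_subset
      rw [h1, h2, h3, h4, hBA]
      calc P (B ∩ A) + P (B \ A) + (Q (B ∩ A) + Q (A \ B))
          ≤ P (B ∩ A) + Q (B \ A) + (Q (B ∩ A) + P (A \ B)) := by
            exact add_le_add (add_le_add le_rfl c1) (add_le_add le_rfl c2)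
        _ = P (B ∩ A) + P (A \ B) + (Q (B ∩ A) + Q (B \ A)) := by ring
    have := ENNReal.toReal_mono (by finiteness) hEN
    rw [ENNReal.toReal_add (measure_ne_top _ _) (measure_ne_top _ _),
      ENNReal.toReal_add (measure_ne_top _ _) (measure_ne_top _ _)] at this
    linarith
  have habs : ∀ B : Set Ω, MeasurableSet B →
      |(P B).toReal - (Q B).toReal| ≤ (P A).toReal - (Q A).toReal := by
    intro B hB
    rw [abs_sub_le_iff]
    refine ⟨key B hB, ?_⟩
    have hc := key Bᶜ hB.compl
    have hPB : (P Bᶜ).toReal = 1 - (P B).toReal := by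
      rw [measure_compl hB (measure_ne_top _ _), measure_univ,
        ENNReal.toReal_sub_of_le (prob_le_one) (by norm_num)]
      norm_num
    have hQB : (Q Bᶜ).toReal = 1 - (Q B).toReal := by
      rw [measure_compl hB (measure_ne_top _ _), measure_univ,
        ENNReal.toReal_sub_of_le (prob_le_one) (by norm_num)]
      norm_num
    rw [hPB, hQB] at hc
    linarith
  refine le_antisymm (tv_le P Q habs) ?_
  have := abs_le_tv P Q hAmeas
  exact le_trans (le_abs_self _) this

lemma chernoff {Ω : Type*} [MeasurableSpace Ω] (μ1 : Measure Ω) [IsProbabilityMeasure μ1]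
    (E : Set Ω) (hE : MeasurableSet E) (n : ℕ) (t : ℝ) (ht : 0 ≤ t) :
    ((Measure.pi (fun _ : Fin n => μ1))
      {x | (n : ℝ) * ((μ1 E).toReal + t) ≤ ∑ i, E.indicator (fun _ => (1:ℝ)) (x i)}).toReal
      ≤ exp (-2 * n * t ^ 2) := by
  letI : MeasureSpace Ω := ⟨μ1⟩
  set q : ℝ := (μ1 E).toReal with hq
  have hq0 : 0 ≤ q := ENNReal.toReal_nonneg
  have hq1 : q ≤ 1 := by
    rw [hq]
    exact ENNReal.toReal_le_of_le_ofReal one_pos.le (by simpa using prob_le_one (μ := μ1) (s := E))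
  set μ : Measure (Fin n → Ω) := Measure.pi (fun _ : Fin n => μ1) with hμ
  haveI : IsProbabilityMeasure μ := by rw [hμ]; infer_instance
  set X : (Fin n → Ω) → ℝ := fun x => ∑ i, E.indicator (fun _ => (1:ℝ)) (x i) with hX
  have hindmeas : Measurable (E.indicator (fun _ => (1:ℝ))) := measurable_const.indicator hE
  have hXmeas : Measurable X :=
    Finset.measurable_sum _ (fun i _ => hindmeas.comp (measurable_pi_apply i))
  have hind01 : ∀ ω, 0 ≤ E.indicator (fun _ => (1:ℝ)) ω ∧ E.indicator (fun _ => (1:ℝ)) ω ≤ 1 := by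
    intro ω; unfold Set.indicator; split <;> norm_num
  have hXbd : ∀ x, 0 ≤ X x ∧ X x ≤ n := by
    intro x
    constructor
    · exact Finset.sum_nonneg fun i _ => (hind01 (x i)).1
    · calc X x ≤ ∑ _i : Fin n, (1:ℝ) := Finset.sum_le_sum fun i _ => (hind01 (x i)).2
      _ = n := by simp
  set L : ℝ := 4 * t with hL
  have hL0 : 0 ≤ L := by positivity
  have h_int : Integrable (fun x => exp (L * X x)) μ := by
    apply Integrable.mono' (integrable_const (exp (L * n)))
      ((measurable_exp.comp (hXmeas.const_mul L)).aestronglyMeasurable)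
    filter_upwards with x
    simp only [Function.comp_apply]
    rw [norm_of_nonneg (exp_pos _).le]
    exact exp_le_exp.mpr (mul_le_mul_of_nonneg_left (hXbd x).2 hL0)
  -- single-factor integral
  have hM : (∫ ω, exp (L * E.indicator (fun _ => (1:ℝ)) ω)) = 1 - q + q * exp L := by
    have hfun : (fun ω => exp (L * E.indicator (fun _ => (1:ℝ)) ω))
        = fun ω => 1 + E.indicator (fun _ => exp L - 1) ω := by
      funext ω
      by_cases h : ω ∈ E <;> simp [Set.indicator_of_mem, Set.indicator_of_notMem, h]
    rw [hfun, integral_add (integrable_const 1) ((integrable_const (exp L - 1)).indicator hE),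
      integral_const, integral_indicator_const _ hE]
    rw [show (ℙ : Measure Ω) = μ1 from rfl]
    simp [hq, measureReal_def]; ring
  -- mgf computation
  have hmgf : mgf X μ L = (1 - q + q * exp L) ^ n := by
    rw [mgf]
    have : (fun x => exp (L * X x)) = fun x : Fin n → Ω =>
        ∏ i, exp (L * E.indicator (fun _ => (1:ℝ)) (x i)) := by
      funext x
      rw [← exp_sum, hX, Finset.mul_sum]
    rw [this]
    show (∫ x : Fin n → Ω, ∏ i, exp (L * E.indicator (fun _ => (1:ℝ)) (x i)) ∂μ) = _
    rw [integral_fintype_prod_eq_pow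
      (fun ω : Ω => exp (L * E.indicator (fun _ => (1:ℝ)) ω))]
    rw [show (∫ ω, exp (L * E.indicator (fun _ => (1:ℝ)) ω) ∂μ1) = 1 - q + q * exp L from hM]
    simp
  have hchern := measure_ge_le_exp_mul_mgf (μ := μ) (X := X) ((n : ℝ) * (q + t)) hL0 h_int
  refine hchern.trans ?_
  rw [hmgf]
  have hMle : 1 - q + q * exp L ≤ exp (L * q + L ^ 2 / 8) := bern_mgf_le hq0 hq1 L
  have hMpos : (0:ℝ) ≤ 1 - q + q * exp L := by nlinarith [exp_pos L]
  calc exp (-L * ((n:ℝ) * (q + t))) * (1 - q + q * exp L) ^ n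
      ≤ exp (-L * ((n:ℝ) * (q + t))) * (exp (L * q + L ^ 2 / 8)) ^ n := by
        apply mul_le_mul_of_nonneg_left _ (exp_pos _).le
        exact pow_le_pow_left₀ hMpos hMle n
    _ = exp (-L * ((n:ℝ) * (q + t)) + n * (L * q + L ^ 2 / 8)) := by
        rw [← exp_nat_mul, ← exp_add]
    _ ≤ exp (-2 * n * t ^ 2) := by
        apply exp_le_exp.mpr
        rw [hL]
        ring_nf
        nlinarith [sq_nonneg t, Nat.cast_nonneg (α := ℝ) n]


end Stmt11Aux

open Stmt11Aux

/-- the Scheffé tournament-winner estimator over a δ-covering set of size `m`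
(the δ-covering number) satisfies, for `η > 8(ε+δ)` and any `θ ∈ Θ` and contamination `Q`,
`P( TV(P_θ̂, P_θ) > η + δ ) ≤ 4 m² exp(-(n/2)(η/4 - 2(ε+δ))²)`. -/
theorem stmt11 {Ω Θ : Type*} [MeasurableSpace Ω]
    (Pm : Θ → Measure Ω) (hPm : ∀ θ, IsProbabilityMeasure (Pm θ))
    (n m : ℕ) (hn : 0 < n) (hm : 0 < m)
    (δ ε η : ℝ) (hδ : 0 ≤ δ) (hε0 : 0 ≤ ε) (hε1 : ε < 1)
    (hη : η > 8 * (ε + δ))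
    (cover : Fin m → Θ)
    (hcover : ∀ θ : Θ, ∃ j, tvDist (Pm (cover j)) (Pm θ) ≤ δ)
    -- `m` is the δ-covering number: no smaller covering set exists
    (hmin : ∀ (m' : ℕ) (cover' : Fin m' → Θ),
      (∀ θ : Θ, ∃ j, tvDist (Pm (cover' j)) (Pm θ) ≤ δ) → m ≤ m')
    -- Scheffé sets `A_{jk} = {p_{θ_j} > p_{θ_k}}`
    (A : Fin m → Fin m → Set Ω)
    (hA : ∀ j k, A j k = {x | (Pm (cover k)).rnDeriv (Pm (cover j) + Pm (cover k)) x
                              < (Pm (cover j)).rnDeriv (Pm (cover j) + Pm (cover k)) x})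
    -- pairwise Scheffé tests
    (φ : Fin m → Fin m → (Fin n → Ω) → Bool)
    (hφ : ∀ j k x, (φ j k x = true ↔
      |(∑ i, (A j k).indicator (fun _ => (1:ℝ)) (x i)) / n - ((Pm (cover j)) (A j k)).toReal|
        > |(∑ i, (A j k).indicator (fun _ => (1:ℝ)) (x i)) / n - ((Pm (cover k)) (A j k)).toReal|))
    -- tournament winner: minimizes the number of lost pairwise competitions
    (jhat : (Fin n → Ω) → Fin m)
    (hjhat : ∀ (x : Fin n → Ω) (j : Fin m),
      (Finset.univ.filter (fun k => k ≠ jhat x ∧ φ (jhat x) k x = true)).card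
        ≤ (Finset.univ.filter (fun k => k ≠ j ∧ φ j k x = true)).card)
    (θ : Θ) (Q : Measure Ω) (hQ : IsProbabilityMeasure Q) :
    ((Measure.pi (fun _ : Fin n => mix ε (Pm θ) Q))
        {x | tvDist (Pm (cover (jhat x))) (Pm θ) > η + δ}).toReal
      ≤ 4 * (m : ℝ) ^ 2 * Real.exp (-((n : ℝ) / 2) * (η / 4 - 2 * (ε + δ)) ^ 2) := by
  haveI := fun j => hPm (cover j)
  haveI := hPm θ
  haveI : IsProbabilityMeasure (mix ε (Pm θ) Q) := mix_prob _ _ hε0 hε1.le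
  set r : ℝ := ε + δ with hr
  have hr0 : 0 ≤ r := by positivity
  set t : ℝ := η / 8 - r with htdef
  have ht : 0 < t := by rw [htdef]; linarith
  set μ1 : Measure Ω := mix ε (Pm θ) Q with hμ1
  set μ : Measure (Fin n → Ω) := Measure.pi (fun _ : Fin n => μ1) with hμ
  haveI : IsProbabilityMeasure μ := by rw [hμ]; infer_instance
  obtain ⟨js, hjs⟩ := hcover θ
  -- measurability of Scheffé sets
  have hAmeas : ∀ j k, MeasurableSet (A j k) := by
    intro j k
    rw [hA]
    exact measurableSet_lt (Measure.measurable_rnDeriv _ _) (Measure.measurable_rnDeriv _ _)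
  -- notation
  set S : Fin m → Fin m → (Fin n → Ω) → ℝ :=
    fun j k x => (∑ i, (A j k).indicator (fun _ => (1:ℝ)) (x i)) / n with hS
  set p : Fin m → Fin m → Fin m → ℝ := fun l j k => ((Pm (cover l)) (A j k)).toReal with hp
  set pb : Fin m → Fin m → ℝ := fun j k => (μ1 (A j k)).toReal with hpb
  -- gap identity
  have hgap : ∀ j k, tvDist (Pm (cover j)) (Pm (cover k)) = p j j k - p k j k := by
    intro j k
    have := scheffe (Pm (cover j)) (Pm (cover k))
    rw [hp]
    simp only []
    rw [this, ← hA j k]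
  -- μ1 is close to P_js
  have hμ1js : tvDist μ1 (Pm (cover js)) ≤ r := by
    calc tvDist μ1 (Pm (cover js)) ≤ tvDist μ1 (Pm θ) + tvDist (Pm θ) (Pm (cover js)) :=
          tv_triangle _ _ _
      _ ≤ ε + δ := by
          refine add_le_add (tv_mix_le _ _ hε0 hε1.le) ?_
          rw [tv_symm]; exact hjs
  -- pointwise closeness at each Scheffé set
  have hclose : ∀ l j k, |pb j k - p l j k| ≤ tvDist μ1 (Pm (cover l)) := by
    intro l j k
    exact abs_le_tv μ1 (Pm (cover l)) (hAmeas j k)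
  -- deterministic step: on the good event the winner is close
  have hdet : ∀ x : Fin n → Ω, (∀ j k, |S j k x - pb j k| < t) →
      ¬ (tvDist (Pm (cover (jhat x))) (Pm θ) > η + δ) := by
    intro x hgood
    set jh : Fin m := jhat x with hjh
    -- general loss bound: if j loses to k then the gap is controlled by closeness to k's side
    have lem2 : ∀ j k, φ j k x = false →
        tvDist (Pm (cover j)) (Pm (cover k)) < 2 * (t + (r + tvDist (Pm (cover js)) (Pm (cover k)))) := by
      intro j k hf
      have hS2 : ¬ (|S j k x - p j j k| > |S j k x - p k j k|) := by
        rw [← hφ j k x]; simp [hf]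
      push_neg at hS2
      have h1 : |pb j k - p k j k| ≤ tvDist μ1 (Pm (cover k)) := hclose k j k
      have h2 : tvDist μ1 (Pm (cover k)) ≤ r + tvDist (Pm (cover js)) (Pm (cover k)) := by
        calc tvDist μ1 (Pm (cover k))
            ≤ tvDist μ1 (Pm (cover js)) + tvDist (Pm (cover js)) (Pm (cover k)) :=
              tv_triangle _ _ _
          _ ≤ _ := by linarith [hμ1js]
      have h3 := hgood j k
      rw [hgap j k]
      have e1 : p j j k - p k j k ≤ |S j k x - p j j k| + |S j k x - p k j k| := by
        rw [abs_sub_comm (S j k x) (p j j k)]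
        calc p j j k - p k j k = (p j j k - S j k x) + (S j k x - p k j k) := by ring
          _ ≤ |p j j k - S j k x| + |S j k x - p k j k| :=
              add_le_add (le_abs_self _) (le_abs_self _)
      have e2 : |S j k x - p k j k| ≤ |S j k x - pb j k| + |pb j k - p k j k| := by
        calc |S j k x - p k j k| = |(S j k x - pb j k) + (pb j k - p k j k)| := by ring_nf
          _ ≤ _ := abs_add_le _ _
      linarith
    -- if js loses to k, then k is close to js
    have lem1 : ∀ k, φ js k x = true →
        tvDist (Pm (cover js)) (Pm (cover k)) < 2 * (t + r) := by
      intro k htr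
      have hS1 : |S js k x - p js js k| > |S js k x - p k js k| := (hφ js k x).mp htr
      have h1 : |pb js k - p js js k| ≤ tvDist μ1 (Pm (cover js)) := hclose js js k
      have h3 := hgood js k
      rw [hgap js k]
      have e2 : |S js k x - p js js k| ≤ |S js k x - pb js k| + |pb js k - p js js k| := by
        calc |S js k x - p js js k| = |(S js k x - pb js k) + (pb js k - p js js k)| := by ring_nf
          _ ≤ _ := abs_add_le _ _
      have e1 : p js js k - p k js k ≤ |S js k x - p js js k| + |S js k x - p k js k| := by
        rw [abs_sub_comm (S js k x) (p js js k)]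
        calc p js js k - p k js k = (p js js k - S js k x) + (S js k x - p k js k) := by ring
          _ ≤ |p js js k - S js k x| + |S js k x - p k js k| :=
              add_le_add (le_abs_self _) (le_abs_self _)
      linarith [hμ1js]
    -- main bound : tv(jh, js) ≤ 8t + 8r = η
    have hmain : tvDist (Pm (cover jh)) (Pm (cover js)) < η ∨ jh = js := by
      by_cases hjeq : jh = js
      · right; exact hjeq
      left
      by_cases hbeat : φ jh js x = false
      · -- jh beats js directly
        have := lem2 jh js hbeat
        have hz : tvDist (Pm (cover js)) (Pm (cover js)) ≤ 0 := by
          apply tv_le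
          intro B hB; simp
        calc tvDist (Pm (cover jh)) (Pm (cover js)) < 2 * (t + (r + tvDist (Pm (cover js)) (Pm (cover js)))) := this
          _ ≤ 2 * (t + r) := by linarith
          _ ≤ η := by rw [htdef]; linarith
      · rw [Bool.not_eq_false] at hbeat
        set C : Finset (Fin m) := Finset.univ.filter (fun k => k ≠ js ∧ φ js k x = true) with hC
        by_cases hjC : jh ∈ C
        · -- then js lost to jh: they are close
          have hφjs : φ js jh x = true := by
            rw [hC] at hjC
            simp only [Finset.mem_filter] at hjC
            exact hjC.2.2
          have := lem1 jh hφjs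
          rw [tv_symm]
          calc tvDist (Pm (cover js)) (Pm (cover jh)) < 2 * (t + r) := this
            _ ≤ η := by rw [htdef]; linarith
        · -- jh beats some k₀ in C ∪ {js}
          have hex : ∃ k₀ ∈ insert js C, φ jh k₀ x = false := by
            by_contra hno
            push_neg at hno
            have hsub : insert js C ⊆ Finset.univ.filter (fun k => k ≠ jh ∧ φ jh k x = true) := by
              intro k hk
              simp only [Finset.mem_filter, Finset.mem_univ, true_and]
              constructor
              · rcases Finset.mem_insert.mp hk with h | h
                · rw [h]; exact fun hc => hjeq hc.symm
                · intro hc; exact hjC (hc ▸ h)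
              · exact Bool.ne_false_iff.mp (hno k hk)
            have hcard : (insert js C).card ≤ C.card := le_trans (Finset.card_le_card hsub) (hjhat x js)
            have : js ∉ C := by
              rw [hC]; simp
            rw [Finset.card_insert_of_notMem this] at hcard
            omega
          obtain ⟨k₀, hk₀mem, hk₀⟩ := hex
          have hjhk₀ := lem2 jh k₀ hk₀
          rcases Finset.mem_insert.mp hk₀mem with h | h
          · -- k₀ = js
            rw [h] at hjhk₀
            have hz : tvDist (Pm (cover js)) (Pm (cover js)) ≤ 0 := by
              apply tv_le; intro B hB; simp
            calc tvDist (Pm (cover jh)) (Pm (cover js))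
                < 2 * (t + (r + tvDist (Pm (cover js)) (Pm (cover js)))) := hjhk₀
              _ ≤ 2 * (t + r) := by linarith
              _ ≤ η := by rw [htdef]; linarith
          · -- k₀ ∈ C : js lost to k₀, so tv(js,k₀) < 2(t+r)
            have hφjsk₀ : φ js k₀ x = true := by
              rw [hC] at h; simp only [Finset.mem_filter] at h; exact h.2.2
            have h1 := lem1 k₀ hφjsk₀
            have h2 : tvDist (Pm (cover jh)) (Pm (cover js))
                ≤ tvDist (Pm (cover jh)) (Pm (cover k₀)) + tvDist (Pm (cover k₀)) (Pm (cover js)) :=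
              tv_triangle _ _ _
            rw [tv_symm (Pm (cover k₀)) (Pm (cover js))] at h2
            calc tvDist (Pm (cover jh)) (Pm (cover js))
                ≤ tvDist (Pm (cover jh)) (Pm (cover k₀)) + tvDist (Pm (cover js)) (Pm (cover k₀)) := h2
              _ < 2 * (t + (r + tvDist (Pm (cover js)) (Pm (cover k₀)))) + 2 * (t + r) := by
                  linarith
              _ < 2 * (t + (r + 2 * (t + r))) + 2 * (t + r) := by linarith
              _ = 8 * t + 8 * r := by ring
              _ ≤ η := by rw [htdef]; linarith
    -- conclude
    have tri : tvDist (Pm (cover jh)) (Pm θ)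
        ≤ tvDist (Pm (cover jh)) (Pm (cover js)) + tvDist (Pm (cover js)) (Pm θ) :=
      tv_triangle _ _ _
    have hjsθ : tvDist (Pm (cover js)) (Pm θ) ≤ δ := hjs
    rcases hmain with h | h
    · intro hcontra
      simp only [gt_iff_lt] at hcontra
      linarith
    · intro hcontra
      simp only [gt_iff_lt] at hcontra
      rw [h] at hcontra
      linarith
  -- union bound over pairs
  set Bad : Fin m × Fin m → Set (Fin n → Ω) :=
    fun jk => {x | t ≤ |S jk.1 jk.2 x - pb jk.1 jk.2|} with hBad
  have hsubset : {x | tvDist (Pm (cover (jhat x))) (Pm θ) > η + δ} ⊆ ⋃ jk, Bad jk := by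
    intro x hx
    by_contra hnot
    simp only [Set.mem_iUnion, not_exists] at hnot
    refine hdet x ?_ hx
    intro j k
    have := hnot (j, k)
    simp only [hBad, Set.mem_setOf_eq, not_le] at this
    exact this
  have hnpos : (0:ℝ) < n := by exact_mod_cast hn
  -- per-pair Chernoff bound
  have hexp : ∀ jk : Fin m × Fin m, μ (Bad jk) ≤ ENNReal.ofReal (2 * exp (-2 * n * t ^ 2)) := by
    rintro ⟨j, k⟩
    have hcompl : (μ1 ((A j k)ᶜ)).toReal = 1 - pb j k := by
      rw [measure_compl (hAmeas j k) (measure_ne_top _ _), measure_univ,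
        ENNReal.toReal_sub_of_le prob_le_one (by norm_num)]
      simp [hpb]
    have hsplit : Bad (j,k) ⊆
        {x | (n : ℝ) * ((μ1 (A j k)).toReal + t) ≤ ∑ i, (A j k).indicator (fun _ => (1:ℝ)) (x i)}
        ∪ {x | (n : ℝ) * ((μ1 ((A j k)ᶜ)).toReal + t)
              ≤ ∑ i, ((A j k)ᶜ).indicator (fun _ => (1:ℝ)) (x i)} := by
      intro x hx
      simp only [hBad, Set.mem_setOf_eq] at hx
      have hSval : S j k x = (∑ i, (A j k).indicator (fun _ => (1:ℝ)) (x i)) / n := rfl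
      set Sn : ℝ := ∑ i, (A j k).indicator (fun _ => (1:ℝ)) (x i) with hSn
      have hsumc : (∑ i, ((A j k)ᶜ).indicator (fun _ => (1:ℝ)) (x i)) = n - Sn := by
        have hpt : ∀ y, ((A j k)ᶜ).indicator (fun _ => (1:ℝ)) y
            = 1 - (A j k).indicator (fun _ => (1:ℝ)) y := by
          intro y; by_cases h : y ∈ A j k <;> simp [h]
        simp only [hpt]
        rw [Finset.sum_sub_distrib]
        simp [hSn]
      rcases le_or_gt (pb j k) (S j k x) with hc | hc
      · left
        have habs : |S j k x - pb j k| = S j k x - pb j k := abs_of_nonneg (by linarith)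
        rw [habs] at hx
        simp only [Set.mem_setOf_eq]
        rw [hSval] at hx
        have : ((μ1 (A j k)).toReal + t) ≤ Sn / n := by
          simp only [hpb] at hx ⊢
          linarith
        calc (n:ℝ) * ((μ1 (A j k)).toReal + t) ≤ n * (Sn / n) :=
              mul_le_mul_of_nonneg_left this hnpos.le
          _ = Sn := by field_simp
      · right
        have habs : |S j k x - pb j k| = -(S j k x - pb j k) := abs_of_nonpos (by linarith)
        rw [habs] at hx
        simp only [Set.mem_setOf_eq]
        rw [hsumc, hcompl]
        rw [hSval] at hx
        have hSnle : Sn / n ≤ pb j k - t := by linarith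
        have : Sn ≤ n * (pb j k - t) := by
          rw [← div_le_iff₀' hnpos] at *
          linarith [hSnle]
        nlinarith
    have hub := measure_union_le (μ := μ)
      {x : Fin n → Ω | (n : ℝ) * ((μ1 (A j k)).toReal + t)
          ≤ ∑ i, (A j k).indicator (fun _ => (1:ℝ)) (x i)}
      {x : Fin n → Ω | (n : ℝ) * ((μ1 ((A j k)ᶜ)).toReal + t)
          ≤ ∑ i, ((A j k)ᶜ).indicator (fun _ => (1:ℝ)) (x i)}
    have hc1 : μ {x : Fin n → Ω | (n : ℝ) * ((μ1 (A j k)).toReal + t)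
          ≤ ∑ i, (A j k).indicator (fun _ => (1:ℝ)) (x i)}
        ≤ ENNReal.ofReal (exp (-2 * n * t ^ 2)) := by
      rw [ENNReal.le_ofReal_iff_toReal_le (measure_ne_top _ _) (exp_pos _).le, hμ]
      exact chernoff μ1 (A j k) (hAmeas j k) n t ht.le
    have hc2 : μ {x : Fin n → Ω | (n : ℝ) * ((μ1 ((A j k)ᶜ)).toReal + t)
          ≤ ∑ i, ((A j k)ᶜ).indicator (fun _ => (1:ℝ)) (x i)}
        ≤ ENNReal.ofReal (exp (-2 * n * t ^ 2)) := by
      rw [ENNReal.le_ofReal_iff_toReal_le (measure_ne_top _ _) (exp_pos _).le, hμ]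
      exact chernoff μ1 ((A j k)ᶜ) (hAmeas j k).compl n t ht.le
    calc μ (Bad (j,k)) ≤ _ := measure_mono hsplit
      _ ≤ _ := hub
      _ ≤ ENNReal.ofReal (exp (-2 * n * t ^ 2)) + ENNReal.ofReal (exp (-2 * n * t ^ 2)) :=
          add_le_add hc1 hc2
      _ = ENNReal.ofReal (2 * exp (-2 * n * t ^ 2)) := by
          rw [← ENNReal.ofReal_add (exp_pos _).le (exp_pos _).le]; ring_nf
  -- assemble
  have hfinal : μ {x | tvDist (Pm (cover (jhat x))) (Pm θ) > η + δ}
      ≤ ENNReal.ofReal ((m : ℝ) ^ 2 * (2 * exp (-2 * n * t ^ 2))) := by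
    calc μ {x | tvDist (Pm (cover (jhat x))) (Pm θ) > η + δ}
        ≤ μ (⋃ jk, Bad jk) := measure_mono hsubset
      _ ≤ ∑' jk, μ (Bad jk) := measure_iUnion_le _
      _ = ∑ jk : Fin m × Fin m, μ (Bad jk) := tsum_fintype _
      _ ≤ ∑ _jk : Fin m × Fin m, ENNReal.ofReal (2 * exp (-2 * n * t ^ 2)) :=
          Finset.sum_le_sum (fun jk _ => hexp jk)
      _ = (Fintype.card (Fin m × Fin m)) * ENNReal.ofReal (2 * exp (-2 * n * t ^ 2)) := by
          rw [Finset.sum_const, Finset.card_univ, nsmul_eq_mul]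
      _ = ENNReal.ofReal ((m : ℝ) ^ 2 * (2 * exp (-2 * n * t ^ 2))) := by
          rw [← ENNReal.ofReal_natCast, ← ENNReal.ofReal_mul (Nat.cast_nonneg _)]
          congr 1
          simp [Fintype.card_prod]
          ring
  have hto := ENNReal.toReal_mono ENNReal.ofReal_ne_top hfinal
  rw [ENNReal.toReal_ofReal (by positivity)] at hto
  refine hto.trans ?_
  have hexpeq : exp (-2 * n * t ^ 2) = exp (-((n : ℝ) / 2) * (η / 4 - 2 * (ε + δ)) ^ 2) := by
    congr 1
    rw [htdef, hr]
    ring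
  rw [hexpeq]
  have hepos := exp_pos (-((n : ℝ) / 2) * (η / 4 - 2 * (ε + δ)) ^ 2)
  nlinarith [sq_nonneg (m:ℝ), hepos]
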